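/- Let δ_{ij} = ∑_{q=max(0, i+j+1-s)}^{min(i,j)} (-1)^{min(i,j)-q} α_{q, i+j+1-q} (i+j+1) with α_{ij} = 1/(i! j!). Then for all nonnegative integers i, j with i + j ≤ s - 1, one has δ_{ij} = 1/(i! j!). -/

import Mathlib

lemma alt_sum (n m : ℕ) :
    ∑ q ∈ Finset.range (m + 1), (-1 : ℝ) ^ q * ((n + 1).choose q : ℝ)
      = (-1 : ℝ) ^ m * (n.choose m : ℝ) := by
  induction m with
  | zero => simp
  | succ m ih =>
    rw [Finset.sum_range_succ, ih, Nat.choose_succ_succ]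
    push_cast
    ring

theorem delta_coefficients (s : ℕ) (hs : 1 ≤ s) (i j : ℕ) (hij : i + j ≤ s - 1) :
    (∑ q ∈ Finset.Icc (i + j + 1 - s) (min i j),
        ((-1 : ℝ) ^ ((min i j : ℤ) - (q : ℤ))) /
          ((Nat.factorial q : ℝ) * (Nat.factorial (i + j + 1 - q) : ℝ)) * ((i : ℝ) + (j : ℝ) + 1))
    = 1 / ((Nat.factorial i : ℝ) * (Nat.factorial j : ℝ)) := by
  have hs0 : i + j + 1 - s = 0 := by omega
  set m := min i j with hm
  set n := i + j with hn
  have hmn : m ≤ n := by omega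
  simp only [show ((i:ℤ) ⊓ (j:ℤ)) = ((m:ℕ):ℤ) from by simp [hm], hn]
  rw [hs0, show Finset.Icc 0 m = Finset.range (m + 1) from by
    ext x; simp [Nat.lt_succ_iff]]
  have hstep : ∀ q ∈ Finset.range (m + 1),
      ((-1 : ℝ) ^ ((m : ℤ) - (q : ℤ))) /
          ((Nat.factorial q : ℝ) * (Nat.factorial (i + j + 1 - q) : ℝ)) * ((i : ℝ) + (j : ℝ) + 1)
        = ((-1 : ℝ) ^ q * ((n + 1).choose q : ℝ)) * ((-1 : ℝ) ^ m / (n.factorial : ℝ)) := by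
    intro q hq
    simp only [Finset.mem_range, Nat.lt_succ_iff] at hq
    have hqn : q ≤ n + 1 := by omega
    have hsign : (-1 : ℝ) ^ ((m : ℤ) - (q : ℤ)) = (-1 : ℝ) ^ m * (-1 : ℝ) ^ q := by
      rw [zpow_sub₀ (by norm_num : (-1 : ℝ) ≠ 0), zpow_natCast, zpow_natCast,
        div_eq_mul_inv, ← inv_pow, inv_neg, inv_one]
    have hch : ((n + 1).choose q : ℝ) * (Nat.factorial q : ℝ) * (Nat.factorial (n + 1 - q) : ℝ)
        = (Nat.factorial (n + 1) : ℝ) := by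
      exact_mod_cast congrArg (Nat.cast : ℕ → ℝ)
        (Nat.choose_mul_factorial_mul_factorial hqn)
    have hq1 : (Nat.factorial q : ℝ) ≠ 0 := by positivity
    have hq2 : (Nat.factorial (n + 1 - q) : ℝ) ≠ 0 := by positivity
    have hn0 : (Nat.factorial n : ℝ) ≠ 0 := by positivity
    have hfact : (Nat.factorial (n + 1) : ℝ) = ((n : ℝ) + 1) * (Nat.factorial n : ℝ) := by
      rw [Nat.factorial_succ]; push_cast; ring
    have hij1 : i + j + 1 - q = n + 1 - q := by omega
    rw [hij1, hsign]
    have : ((i : ℝ) + (j : ℝ) + 1) = (n : ℝ) + 1 := by push_cast [hn]; ring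
    rw [this]
    field_simp
    linear_combination (-1 : ℝ) * hch + (-1 : ℝ) * hfact
  rw [Finset.sum_congr rfl hstep, ← Finset.sum_mul, alt_sum]
  have hch2 : (n.choose m : ℝ) * (Nat.factorial m : ℝ) * (Nat.factorial (n - m) : ℝ)
      = (Nat.factorial n : ℝ) := by
    exact_mod_cast congrArg (Nat.cast : ℕ → ℝ)
      (Nat.choose_mul_factorial_mul_factorial hmn)
  have hfacts : (Nat.factorial m : ℝ) * (Nat.factorial (n - m) : ℝ)
      = (Nat.factorial i : ℝ) * (Nat.factorial j : ℝ) := by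
    rcases le_total i j with h | h
    · have : m = i := by omega
      have h2 : n - m = j := by omega
      rw [h2, this]
    · have : m = j := by omega
      have h2 : n - m = i := by omega
      rw [h2, this]; ring
  have hn0 : (Nat.factorial n : ℝ) ≠ 0 := by positivity
  have hi0 : (Nat.factorial i : ℝ) ≠ 0 := by positivity
  have hj0 : (Nat.factorial j : ℝ) ≠ 0 := by positivity
  have hsq : (-1 : ℝ) ^ m * (-1 : ℝ) ^ m = 1 := by
    rw [← pow_add]; exact Even.neg_one_pow ⟨m, by ring⟩
  field_simp
  linear_combination ((n.choose m : ℝ) * ((Nat.factorial i : ℝ) * (Nat.factorial j : ℝ))) * hsq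
    - (n.choose m : ℝ) * hfacts + hch2
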